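/- Let (α, μ) be a measure space with μ σ-finite, let N ≥ 1 be a natural number, and let ψ : Fin N → α → ℂ be measurable functions that are orthonormal in L²(μ): for all i, j, ∫ conj(ψ i x) * ψ j x ∂μ = if i = j then 1 else 0 (and each ψ i is in L²(μ)). Fix r ∈ α and consider the N×N matrix M(r, y) whose column 0 has entries ψ i r and whose column (j+1) has entries ψ i (y j), for y : Fin (N-1) → α (i.e. M(r,y) i k = ψ i (Fin.cons r y k) with the first coordinate fixed to r). Then ∫ ‖det (M(r, y))‖² ∂(Measure.pi fun _ : Fin (N-1) => μ) = (N-1)! * ∑_{i} ‖ψ i r‖². Equivalently, the one-particle density of the Slater determinant Ψ(r₁,…,r_N) = (N!)^{-1/2} det[ψ_i(r_j)] satisfies ρ(r) = N ∫ ‖Ψ(r, y₁, …, y_{N-1})‖² dμ^{⊗(N-1)} = ∑_{i=1}^{N} ‖ψ_i(r)‖². -/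

import Mathlib

open MeasureTheory

private lemma slater_perm_eq {n : ℕ} (σ τ : Equiv.Perm (Fin (n + 1))) :
    (∀ j : Fin n, σ j.succ = τ j.succ) ↔ σ = τ := by
  constructor
  · intro h
    refine Equiv.ext fun k => ?_
    induction k using Fin.cases with
    | succ j => exact h j
    | zero =>
      rcases Fin.eq_zero_or_eq_succ (σ.symm (τ 0)) with h0 | ⟨j, hj⟩
      · have : τ 0 = σ 0 := by
          conv_lhs => rw [← σ.apply_symm_apply (τ 0), h0]
        rw [this]
      · have h1 : σ j.succ = τ 0 := by
          rw [← hj, σ.apply_symm_apply]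
        rw [h j] at h1
        exact absurd (τ.injective h1) (Fin.succ_ne_zero j)
  · rintro rfl j; rfl

private lemma slater_integrable_conj_mul {α : Type*} [MeasurableSpace α] {μ : Measure α}
    {f g : α → ℂ} (hf : MemLp f 2 μ) (hg : MemLp g 2 μ) :
    Integrable (fun x => (starRingEnd ℂ) (f x) * g x) μ := by
  have hconj : MemLp (fun x => (starRingEnd ℂ) (f x)) 2 μ :=
    hf.of_le_mul (c := 1) (Complex.continuous_conj.comp_aestronglyMeasurable hf.1)
      (Filter.Eventually.of_forall fun x => by simp)
  have h1 : MemLp (fun x => (starRingEnd ℂ) (f x) * g x) 1 μ :=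
    hg.smul (φ := fun x => (starRingEnd ℂ) (f x)) hconj
      (r := 1) (hpqr := ⟨by rw [inv_one, ENNReal.inv_two_add_inv_two]⟩)
  exact memLp_one_iff_integrable.mp h1

private lemma slater_aux {α : Type*} [MeasurableSpace α] (μ : Measure α) [SigmaFinite μ]
    (n : ℕ) (ψ : Fin (n + 1) → α → ℂ)
    (hL2 : ∀ i, MemLp (ψ i) 2 μ)
    (horth : ∀ i j, ∫ x, (starRingEnd ℂ) (ψ i x) * ψ j x ∂μ =
      if i = j then 1 else 0)
    (r : α) :
    ∫ y : Fin n → α,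
        ‖(Matrix.of fun i k => ψ i ((Fin.cons r y : Fin (n + 1) → α) k)).det‖ ^ 2
        ∂(Measure.pi fun _ : Fin n => μ) =
      (n.factorial : ℝ) * ∑ i, ‖ψ i r‖ ^ 2 := by
  classical
  letI : MeasureSpace α := ⟨μ⟩
  haveI : SigmaFinite (volume : Measure α) := ‹SigmaFinite μ›
  have hvol : (Measure.pi fun _ : Fin n => μ) = (volume : Measure (Fin n → α)) := rfl
  rw [hvol]
  set d : (Fin n → α) → ℂ := fun y => (Matrix.of fun i k => ψ i ((Fin.cons r y : Fin (n + 1) → α) k)).det with hd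
  -- pointwise expansion
  have hexp : ∀ y : Fin n → α,
      (starRingEnd ℂ) (d y) * d y =
      ∑ p : Equiv.Perm (Fin (n + 1)) × Equiv.Perm (Fin (n + 1)),
        ((((Equiv.Perm.sign p.1 : ℤ) : ℂ) * ((Equiv.Perm.sign p.2 : ℤ) : ℂ)) *
          ((starRingEnd ℂ) (ψ (p.1 0) r) * ψ (p.2 0) r)) *
        ∏ j : Fin n, ((starRingEnd ℂ) (ψ (p.1 j.succ) (y j)) * ψ (p.2 j.succ) (y j)) := by
    intro y
    rw [hd]
    simp only [Matrix.det_apply, Matrix.of_apply]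
    rw [map_sum, Finset.sum_mul_sum, ← Fintype.sum_prod_type']
    refine Finset.sum_congr rfl fun p _ => ?_
    simp only [Units.smul_def, zsmul_eq_mul, map_mul, map_intCast, map_prod,
      Fin.prod_univ_succ, Fin.cons_zero, Fin.cons_succ, Finset.prod_mul_distrib]
    ring
  -- integrability of each term
  have hintpair : ∀ a b : Fin (n + 1),
      Integrable (fun x => (starRingEnd ℂ) (ψ a x) * ψ b x) volume :=
    fun a b => slater_integrable_conj_mul (hL2 a) (hL2 b)
  have hint : ∀ p : Equiv.Perm (Fin (n + 1)) × Equiv.Perm (Fin (n + 1)),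
      Integrable (fun y : Fin n → α =>
        ((((Equiv.Perm.sign p.1 : ℤ) : ℂ) * ((Equiv.Perm.sign p.2 : ℤ) : ℂ)) *
          ((starRingEnd ℂ) (ψ (p.1 0) r) * ψ (p.2 0) r)) *
        ∏ j : Fin n, ((starRingEnd ℂ) (ψ (p.1 j.succ) (y j)) * ψ (p.2 j.succ) (y j)))
        volume := by
    intro p
    exact (Integrable.fin_nat_prod (fun j => hintpair (p.1 j.succ) (p.2 j.succ))).const_mul _
  -- complex-valued computation
  have key : ∫ y : Fin n → α, (starRingEnd ℂ) (d y) * d y =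
      (n.factorial : ℂ) * ∑ i, ((‖ψ i r‖ : ℂ) ^ 2) := by
    simp only [hexp]
    rw [integral_finset_sum _ (fun p _ => hint p)]
    have step : ∀ p : Equiv.Perm (Fin (n + 1)) × Equiv.Perm (Fin (n + 1)),
        (∫ y : Fin n → α,
          ((((Equiv.Perm.sign p.1 : ℤ) : ℂ) * ((Equiv.Perm.sign p.2 : ℤ) : ℂ)) *
            ((starRingEnd ℂ) (ψ (p.1 0) r) * ψ (p.2 0) r)) *
          ∏ j : Fin n, ((starRingEnd ℂ) (ψ (p.1 j.succ) (y j)) * ψ (p.2 j.succ) (y j))) =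
        if p.1 = p.2 then
          ((((Equiv.Perm.sign p.1 : ℤ) : ℂ) * ((Equiv.Perm.sign p.2 : ℤ) : ℂ)) *
            ((starRingEnd ℂ) (ψ (p.1 0) r) * ψ (p.2 0) r)) else 0 := by
      intro p
      rw [integral_const_mul, ← hvol, MeasureTheory.integral_fin_nat_prod_eq_prod
        (f := fun j x => (starRingEnd ℂ) (ψ (p.1 j.succ) x) * ψ (p.2 j.succ) x)]
      have : ∀ j : Fin n, (∫ x, (starRingEnd ℂ) (ψ (p.1 j.succ) x) * ψ (p.2 j.succ) x ∂μ) =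
          if p.1 j.succ = p.2 j.succ then (1 : ℂ) else 0 := fun j => horth _ _
      simp only [this, Finset.prod_boole]
      simp only [Finset.mem_univ, forall_true_left, slater_perm_eq p.1 p.2]
      split <;> simp
    simp only [step]
    rw [Fintype.sum_prod_type]
    have inner : ∀ σ : Equiv.Perm (Fin (n + 1)),
        (∑ τ : Equiv.Perm (Fin (n + 1)),
          if σ = τ then
            ((((Equiv.Perm.sign σ : ℤ) : ℂ) * ((Equiv.Perm.sign τ : ℤ) : ℂ)) *
              ((starRingEnd ℂ) (ψ (σ 0) r) * ψ (τ 0) r)) else 0) =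
        ((‖ψ (σ 0) r‖ : ℂ) ^ 2) := by
      intro σ
      rw [Finset.sum_ite_eq]
      simp only [Finset.mem_univ, if_true]
      rw [← Int.cast_mul, ← Units.val_mul, Int.units_mul_self, Units.val_one, Int.cast_one,
        one_mul, ← Complex.normSq_eq_conj_mul_self, Complex.normSq_eq_norm_sq]
      push_cast
      ring
    simp only [inner]
    rw [← Equiv.sum_comp Equiv.Perm.decomposeFin.symm
      (fun σ : Equiv.Perm (Fin (n + 1)) => ((‖ψ (σ 0) r‖ : ℂ) ^ 2))]
    rw [Fintype.sum_prod_type]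
    simp only [Equiv.Perm.decomposeFin_symm_apply_zero, Finset.sum_const,
      Finset.card_univ, Fintype.card_perm, Fintype.card_fin, nsmul_eq_mul]
    rw [← Finset.mul_sum]
  -- pass to the real statement
  have h1 : ∫ y : Fin n → α, ((‖d y‖ ^ 2 : ℝ) : ℂ) =
      ∫ y : Fin n → α, (starRingEnd ℂ) (d y) * d y := by
    refine integral_congr_ae (Filter.Eventually.of_forall fun y => ?_)
    show ((‖d y‖ ^ 2 : ℝ) : ℂ) = (starRingEnd ℂ) (d y) * d y
    rw [← Complex.normSq_eq_conj_mul_self, Complex.normSq_eq_norm_sq]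
  have h1' : ((∫ y : Fin n → α, ‖d y‖ ^ 2 : ℝ) : ℂ) =
      ∫ y : Fin n → α, (starRingEnd ℂ) (d y) * d y := by
    rw [← h1]; exact integral_ofReal.symm
  have h2 : ((∫ y : Fin n → α, ‖d y‖ ^ 2 : ℝ) : ℂ) =
      (((n.factorial : ℝ) * ∑ i, ‖ψ i r‖ ^ 2 : ℝ) : ℂ) := by
    rw [h1', key]; push_cast; ring
  exact_mod_cast h2

/-- One-particle density of the Slater determinant: if `ψ 0, …, ψ (N-1)` are
measurable functions orthonormal in `L²(μ)` and `r` is a fixed point, then the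
`(N-1)`-fold integral of the squared modulus of the determinant of the matrix whose
column `0` has entries `ψ i r` and whose column `j+1` has entries `ψ i (y j)` equals
`(N-1)! * ∑ i, ‖ψ i r‖²`. Equivalently, the one-particle density of the normalized
Slater determinant satisfies `ρ(r) = ∑ i, ‖ψ i r‖²`. -/
theorem slater_determinant_one_particle_density
    {α : Type*} [MeasurableSpace α] (μ : Measure α) [SigmaFinite μ]
    (N : ℕ) (hN : 1 ≤ N) (ψ : Fin N → α → ℂ)
    (hmeas : ∀ i, Measurable (ψ i))
    (hL2 : ∀ i, MemLp (ψ i) 2 μ)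
    (horth : ∀ i j, ∫ x, (starRingEnd ℂ) (ψ i x) * ψ j x ∂μ =
      if i = j then 1 else 0)
    (r : α) :
    ∫ y : Fin (N - 1) → α,
        ‖(Matrix.of fun i k =>
            ψ i ((Fin.cons r y : Fin (N - 1 + 1) → α) (Fin.cast (Nat.succ_pred_eq_of_pos hN).symm k))).det‖ ^ 2
        ∂(Measure.pi fun _ : Fin (N - 1) => μ) =
      ((N - 1).factorial : ℝ) * ∑ i, ‖ψ i r‖ ^ 2 := by
  obtain ⟨n, rfl⟩ : ∃ n, N = n + 1 := ⟨N - 1, (Nat.succ_pred_eq_of_pos hN).symm⟩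
  have hcast : (Fin.cast (Nat.succ_pred_eq_of_pos hN).symm : Fin (n + 1) → Fin (n + 1 - 1 + 1)) =
      id := by
    funext k; exact Fin.ext rfl
  rw [hcast]
  exact slater_aux μ n ψ hL2 horth r
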